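/- Let L/K be a cyclic Galois extension of even degree n with Gal(L/K) = ⟨σ⟩, and let i be such that the order of σ^i is congruent to 2 modulo 4 and is not equal to 2. Then there exist K-subspaces 𝒰_i and 𝒱_i of A^{σ^i} with A^{σ^i} = 𝒰_i ⊕ 𝒱_i (internal direct sum), where 𝒰_i and 𝒱_i each have K-dimension n/2, every nonzero form in 𝒰_i is nondegenerate, and every nonzero form in 𝒱_i has rank n − 2n/ord(σ^i). -/

import Mathlib

open Module

/-- The symmetric `K`-bilinear form `φ_{b,σ}(x,y) = Tr_{L/K}(b·(x·σ(y) + σ(x)·y))`,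
as a bilinear form `L →ₗ[K] L →ₗ[K] K`. -/
noncomputable def phi (K L : Type*) [Field K] [Field L] [Algebra K L]
    (b : L) (σ : L ≃ₐ[K] L) : L →ₗ[K] L →ₗ[K] K :=
  (Algebra.traceForm K L).compl₁₂ (LinearMap.mulLeft K b) σ.toLinearMap +
    (Algebra.traceForm K L).compl₁₂ ((LinearMap.mulLeft K b).comp σ.toLinearMap) LinearMap.id

/-- The `K`-subspace `A^τ = {φ_{b,τ} : b ∈ L}` of the space of bilinear forms on `L`. -/
noncomputable def Asub (K L : Type*) [Field K] [Field L] [Algebra K L]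
    (σ : L ≃ₐ[K] L) : Submodule K (L →ₗ[K] L →ₗ[K] K) :=
  Submodule.span K (Set.range fun b : L => phi K L b σ)

section Helpers

variable {K L : Type*} [Field K] [Field L] [Algebra K L]

lemma prod_range_shift_one {r : ℕ} (g : ℕ → L) (h0 : g 0 ≠ 0) (hr : g r = g 0) :
    ∏ j ∈ Finset.range r, g (j + 1) = ∏ j ∈ Finset.range r, g j := by
  apply mul_right_cancel₀ h0
  rw [← Finset.prod_range_succ' g r, Finset.prod_range_succ g r, hr]

lemma prod_range_shift {r : ℕ} (g : ℕ → L) (hper : ∀ j, g (j + r) = g j)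
    (hne : ∀ j, g j ≠ 0) : ∀ t, ∏ j ∈ Finset.range r, g (j + t) = ∏ j ∈ Finset.range r, g j := by
  intro t
  induction t with
  | zero => simp
  | succ t ih =>
    have e1 : ∀ j, g (j + (t + 1)) = (fun j => g (j + t)) (j + 1) := by
      intro j; simp only []; congr 1; omega
    rw [Finset.prod_congr rfl fun j _ => e1 j]
    rw [prod_range_shift_one (fun j => g (j + t)) (by simpa using hne t) ?_]
    · exact ih
    · show g (r + t) = g (0 + t)
      have e2 : r + t = t + r := by omega
      rw [e2, hper]; congr 1; omega

lemma eigen_pow (ρ : L ≃ₐ[K] L) {c x : L} (h : ρ x = c * x) (k : ℕ) :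
    (ρ ^ k) x = (∏ j ∈ Finset.range k, (ρ ^ j) c) * x := by
  induction k with
  | zero => simp
  | succ k ih =>
    rw [pow_succ', AlgEquiv.mul_apply, ih, map_mul, h, map_prod,
      Finset.prod_range_succ']
    have : ∀ j ∈ Finset.range k, ρ ((ρ ^ j) c) = (ρ ^ (j + 1)) c := by
      intro j _; rw [pow_succ', AlgEquiv.mul_apply]
    rw [Finset.prod_congr rfl this]
    simp [mul_assoc, mul_comm, mul_left_comm]

end Helpers

section Trace

variable {K L : Type*} [Field K] [Field L] [Algebra K L]
  [FiniteDimensional K L] [IsGalois K L]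

lemma trace_algEquiv_apply (τ : L ≃ₐ[K] L) (a : L) :
    Algebra.trace K L (τ a) = Algebra.trace K L a := by
  apply (algebraMap K L).injective
  rw [trace_eq_sum_automorphisms, trace_eq_sum_automorphisms]
  exact Fintype.sum_equiv (Equiv.mulRight τ) _ _ fun g => rfl

lemma phi_apply (b : L) (τ : L ≃ₐ[K] L) (x y : L) :
    phi K L b τ x y =
      Algebra.trace K L (b * x * τ y) + Algebra.trace K L (b * τ x * y) := by
  simp [phi, Algebra.traceForm_apply, mul_assoc]

lemma phi_apply_eq (b : L) (τ : L ≃ₐ[K] L) (x y : L) :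
    phi K L b τ x y =
      Algebra.traceForm K L (τ.symm (b * x + τ b * τ (τ x))) y := by
  rw [phi_apply, Algebra.traceForm_apply]
  have h1 : τ.symm (b * x + τ b * τ (τ x)) = τ.symm (b * x) + b * τ x := by
    rw [map_add]
    congr 1
    rw [map_mul, AlgEquiv.symm_apply_apply, AlgEquiv.symm_apply_apply]
  rw [h1, add_mul, map_add]
  congr 1
  conv_rhs => rw [← trace_algEquiv_apply τ (τ.symm (b * x) * y)]
  rw [map_mul τ, AlgEquiv.apply_symm_apply, mul_assoc]

lemma phi_eq_zero_iff (b : L) (τ : L ≃ₐ[K] L) (x : L) :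
    phi K L b τ x = 0 ↔ b * x + τ b * τ (τ x) = 0 := by
  constructor
  · intro h
    have hz : τ.symm (b * x + τ b * τ (τ x)) = 0 := by
      apply (traceForm_nondegenerate K L).1
      intro y
      rw [← phi_apply_eq, h, LinearMap.zero_apply]
    have := congrArg τ hz
    rwa [AlgEquiv.apply_symm_apply, map_zero] at this
  · intro h
    apply LinearMap.ext; intro y
    rw [phi_apply_eq, h, map_zero, LinearMap.zero_apply]
    simp

end Trace

noncomputable def PhiMap (K L : Type*) [Field K] [Field L] [Algebra K L]
    (τ : L ≃ₐ[K] L) : L →ₗ[K] (L →ₗ[K] L →ₗ[K] K) where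
  toFun b := phi K L b τ
  map_add' b b' := by
    ext x y
    simp only [phi, LinearMap.add_apply, LinearMap.compl₁₂_apply, LinearMap.comp_apply,
      LinearMap.mulLeft_apply, Algebra.traceForm_apply, LinearMap.id_coe, id_eq,
      AlgEquiv.toLinearMap_apply]
    rw [add_mul, add_mul, map_add, add_mul, add_mul, map_add]
    ring
  map_smul' k b := by
    ext x y
    simp only [phi, LinearMap.add_apply, LinearMap.compl₁₂_apply, LinearMap.comp_apply,
      LinearMap.mulLeft_apply, Algebra.traceForm_apply, LinearMap.id_coe, id_eq,
      AlgEquiv.toLinearMap_apply, RingHom.id_apply, LinearMap.smul_apply]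
    rw [smul_mul_assoc, smul_mul_assoc, map_smul, smul_mul_assoc, smul_mul_assoc, map_smul]
    simp [smul_add, mul_add]

@[simp] lemma PhiMap_apply (K L : Type*) [Field K] [Field L] [Algebra K L]
    (τ : L ≃ₐ[K] L) (b : L) : PhiMap K L τ b = phi K L b τ := rfl

lemma Asub_eq (K L : Type*) [Field K] [Field L] [Algebra K L] (τ : L ≃ₐ[K] L) :
    Asub K L τ = LinearMap.range (PhiMap K L τ) := by
  apply le_antisymm
  · rw [Asub, Submodule.span_le]
    rintro _ ⟨b, rfl⟩
    exact ⟨b, rfl⟩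
  · rintro _ ⟨b, rfl⟩
    exact Submodule.subset_span ⟨b, rfl⟩

section Prod

variable {K L : Type*} [Field K] [Field L] [Algebra K L]

lemma algEquiv_map_pm_one (g : L ≃ₐ[K] L) {ε : L} (hε : ε = 1 ∨ ε = -1) : g ε = ε := by
  rcases hε with rfl | rfl
  · exact map_one g
  · rw [map_neg, map_one]

lemma prod_eigen_val (τ : L ≃ₐ[K] L) {r : ℕ} (hrodd : Odd r)
    (hper : τ ^ (2 * r) = 1) {b ε : L} (hb : b ≠ 0) (hε : ε = 1 ∨ ε = -1)
    (hsb : (τ ^ r) b = ε * b) :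
    ∏ j ∈ Finset.range r, ((τ ^ 2) ^ j) (-(b * (τ b)⁻¹)) = -ε := by
  have hbne : ∀ k : ℕ, (τ ^ k) b ≠ 0 := fun k h => hb (by
    have := congrArg (τ ^ k).symm h
    rwa [AlgEquiv.symm_apply_apply, map_zero] at this)
  have hεne : ε ≠ 0 := by rcases hε with rfl | rfl <;> norm_num
  set P : L := ∏ j ∈ Finset.range r, (τ ^ (2 * j)) b with hP
  set Q : L := ∏ j ∈ Finset.range r, (τ ^ (2 * j + 1)) b with hQ
  have hPne : P ≠ 0 := Finset.prod_ne_zero_iff.mpr fun j _ => hbne _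
  have hQne : Q ≠ 0 := Finset.prod_ne_zero_iff.mpr fun j _ => hbne _
  obtain ⟨t0, ht0⟩ := id hrodd
  -- Step A : (τ ^ r) P = Q
  have hgper : ∀ j : ℕ, (fun j => (τ ^ (2 * j + 1)) b) (j + r) =
      (fun j => (τ ^ (2 * j + 1)) b) j := by
    intro j
    have : 2 * (j + r) + 1 = (2 * j + 1) + 2 * r := by omega
    simp only [this, pow_add, hper, AlgEquiv.mul_apply, AlgEquiv.one_apply]
  have hstepA : (τ ^ r) P = Q := by
    rw [hP, map_prod]
    have h1 : ∀ j ∈ Finset.range r, (τ ^ r) ((τ ^ (2 * j)) b) =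
        (fun j => (τ ^ (2 * j + 1)) b) (j + t0) := by
      intro j _
      simp only [← AlgEquiv.mul_apply, ← pow_add]
      congr 2
      omega
    rw [Finset.prod_congr rfl h1,
      prod_range_shift (fun j => (τ ^ (2 * j + 1)) b) hgper (fun j => hbne _) t0]
  -- Step B : (τ ^ r) P = ε * P
  have hstepB : (τ ^ r) P = ε * P := by
    rw [hP, map_prod]
    have h1 : ∀ j ∈ Finset.range r, (τ ^ r) ((τ ^ (2 * j)) b) =
        ε * (τ ^ (2 * j)) b := by
      intro j _
      rw [← AlgEquiv.mul_apply, ← pow_add, add_comm, pow_add, AlgEquiv.mul_apply, hsb,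
        map_mul, algEquiv_map_pm_one _ hε]
    rw [Finset.prod_congr rfl h1, Finset.prod_mul_distrib, Finset.prod_const,
      Finset.card_range]
    congr 1
    rcases hε with rfl | rfl
    · rw [one_pow]
    · rw [hrodd.neg_one_pow]
  have hQP : Q = ε * P := hstepA ▸ hstepB
  -- Step C : compute the product
  have hterm : ∀ j ∈ Finset.range r, ((τ ^ 2) ^ j) (-(b * (τ b)⁻¹)) =
      (-1) * ((τ ^ (2 * j)) b * ((τ ^ (2 * j + 1)) b)⁻¹) := by
    intro j _
    rw [← pow_mul, map_neg, map_mul, map_inv₀, neg_one_mul, pow_succ, AlgEquiv.mul_apply]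
  rw [Finset.prod_congr rfl hterm, Finset.prod_mul_distrib, Finset.prod_const,
    Finset.card_range, Finset.prod_mul_distrib, Finset.prod_inv_distrib, ← hP, ← hQ, hQP,
    hrodd.neg_one_pow]
  field_simp
  rcases hε with rfl | rfl <;> ring

end Prod

section Hilbert

variable {K L : Type*} [Field K] [Field L] [Algebra K L]

lemma exists_eigenvector {r : ℕ} (hr : 0 < r) (ρ : L ≃ₐ[K] L) (hρr : ρ ^ r = 1)
    (hd : ∀ k l : ℕ, k < r → l < r → ρ ^ k = ρ ^ l → k = l)
    {c : L} (hc : c ≠ 0) (hN : ∏ j ∈ Finset.range r, (ρ ^ j) c = 1) :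
    ∃ x : L, x ≠ 0 ∧ ρ x = c * x := by
  have hcne : ∀ k : ℕ, (ρ ^ k) c ≠ 0 := fun k h => hc (by
    have := congrArg (ρ ^ k).symm h
    rwa [AlgEquiv.symm_apply_apply, map_zero] at this)
  set e : ℕ → L := fun k => ∏ j ∈ Finset.range k, (ρ ^ j) c with he
  have hek : ∀ k, e k ≠ 0 := fun k => Finset.prod_ne_zero_iff.mpr fun j _ => hcne j
  have hstep : ∀ k, e (k + 1) = ρ (e k) * c := by
    intro k
    rw [he]
    simp only []
    rw [Finset.prod_range_succ', map_prod, pow_zero, AlgEquiv.one_apply]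
    congr 1
    apply Finset.prod_congr rfl
    intro j _
    rw [pow_succ', AlgEquiv.mul_apply]
  -- linear independence of the automorphisms ρ^k, k < r
  have hf_inj : Function.Injective
      (fun k : Fin r => ((ρ ^ (k : ℕ)).toRingEquiv.toMulEquiv.toMonoidHom : L →* L)) := by
    intro k l h
    apply Fin.ext
    apply hd _ _ k.isLt l.isLt
    apply AlgEquiv.ext
    intro x
    exact DFunLike.congr_fun h x
  have hli := (linearIndependent_monoidHom L L).comp _ hf_inj
  have hex : ∃ t : L, ∑ k ∈ Finset.range r, (e k)⁻¹ * (ρ ^ k) t ≠ 0 := by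
    by_contra hcon
    push_neg at hcon
    have hzero : (∑ k : Fin r, (e (k : ℕ))⁻¹ •
        (((fun f : L →* L => (f : L → L)) ∘
          (fun k : Fin r => ((ρ ^ (k : ℕ)).toRingEquiv.toMulEquiv.toMonoidHom : L →* L))) k))
        = 0 := by
      funext t
      rw [Finset.sum_apply]
      simp only [Function.comp_apply, Pi.smul_apply, smul_eq_mul, Pi.zero_apply]
      have := hcon t
      rw [← Fin.sum_univ_eq_sum_range (fun k => (e k)⁻¹ * (ρ ^ k) t) r] at this
      simpa using this
    have := Fintype.linearIndependent_iff.mp hli (fun k => (e (k : ℕ))⁻¹) hzero ⟨0, hr⟩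
    exact hek 0 (by simpa using inv_eq_zero.mp this)
  obtain ⟨t, ht⟩ := hex
  refine ⟨∑ k ∈ Finset.range r, (e k)⁻¹ * (ρ ^ k) t, ht, ?_⟩
  rw [map_sum]
  have h1 : ∀ k ∈ Finset.range r, ρ ((e k)⁻¹ * (ρ ^ k) t) =
      c * ((fun k => (e k)⁻¹ * (ρ ^ k) t) (k + 1)) := by
    intro k _
    rw [map_mul, map_inv₀]
    have h2 : ρ (e k) = e (k + 1) * c⁻¹ := by
      rw [hstep k, mul_assoc, mul_inv_cancel₀ hc, mul_one]
    have h3 : ρ ((ρ ^ k) t) = (ρ ^ (k + 1)) t := by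
      rw [pow_succ', AlgEquiv.mul_apply]
    rw [h2, h3, mul_inv, inv_inv]
    ring
  rw [Finset.sum_congr rfl h1, ← Finset.mul_sum]
  congr 1
  have hsum := Finset.sum_range_succ' (fun k => (e k)⁻¹ * (ρ ^ k) t) r
  have hsum2 := Finset.sum_range_succ (fun k => (e k)⁻¹ * (ρ ^ k) t) r
  have hr0 : (e r)⁻¹ * (ρ ^ r) t = (e 0)⁻¹ * (ρ ^ 0) t := by
    rw [hρr, pow_zero]
    have her : e r = 1 := hN
    have he0 : e 0 = 1 := by simp [he]
    rw [her, he0]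
  have hkey := hsum.symm.trans hsum2
  rw [hr0] at hkey
  simpa using add_right_cancel hkey

end Hilbert
/-- Let `L/K` be a cyclic Galois extension of even degree `n` with
`Gal(L/K) = ⟨σ⟩`, and let `i` be such that the order of `σ^i` is congruent to `2` modulo
`4` and is not equal to `2`.  Then there exist `K`-subspaces `𝒰_i` and `𝒱_i` of `A^{σ^i}`
with `A^{σ^i} = 𝒰_i ⊕ 𝒱_i` (internal direct sum), where `𝒰_i` and `𝒱_i` each have
`K`-dimension `n/2`, every nonzero form in `𝒰_i` is nondegenerate, and every nonzero form
in `𝒱_i` has rank `n − 2n/ord(σ^i)`. -/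
theorem Asub_decomposition_ord_two_mod_four (K L : Type*) [Field K] [Field L] [Algebra K L]
    [FiniteDimensional K L] [IsGalois K L] (h2 : (2 : K) ≠ 0)
    (n : ℕ) (hn : finrank K L = n) (hneven : Even n)
    (σ : L ≃ₐ[K] L) (hgen : ∀ τ : L ≃ₐ[K] L, τ ∈ Subgroup.zpowers σ)
    (i : ℕ) (hordmod : orderOf (σ ^ i) % 4 = 2) (hordne : orderOf (σ ^ i) ≠ 2) :
    ∃ 𝒰 𝒱 : Submodule K (L →ₗ[K] L →ₗ[K] K),
      𝒰 ⊔ 𝒱 = Asub K L (σ ^ i) ∧ 𝒰 ⊓ 𝒱 = ⊥ ∧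
      finrank K 𝒰 = n / 2 ∧ finrank K 𝒱 = n / 2 ∧
      (∀ B ∈ 𝒰, B ≠ 0 → LinearMap.ker B = ⊥) ∧
      (∀ B ∈ 𝒱, B ≠ 0 →
        finrank K L - finrank K (LinearMap.ker B) = n - 2 * n / orderOf (σ ^ i)) := by
  classical
  set τ : L ≃ₐ[K] L := σ ^ i with hτdef
  set m : ℕ := orderOf τ with hmdef
  set r : ℕ := m / 2 with hrdef
  have hm2r : m = 2 * r := by omega
  have hrodd : Odd r := ⟨m / 4, by omega⟩
  have hrpos : 0 < r := by omega
  have hr3 : 3 ≤ r := by omega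
  have hτm : τ ^ m = 1 := pow_orderOf_eq_one τ
  have h2rτ : τ ^ (2 * r) = 1 := by rw [← hm2r]; exact hτm
  have hmn : m ∣ n := by
    rw [← hn, ← IsGalois.card_aut_eq_finrank K L, hmdef]
    exact orderOf_dvd_natCard τ
  have hnpos : 0 < n := by rw [← hn]; exact finrank_pos
  have h2L : (2 : L) ≠ 0 := by
    intro h
    apply h2
    apply (algebraMap K L).injective
    rw [map_ofNat, map_zero, h]
  set s : L ≃ₐ[K] L := τ ^ r with hsdef
  set ρ : L ≃ₐ[K] L := τ ^ 2 with hρdef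
  have hords : orderOf s = 2 := by
    rw [hsdef, orderOf_pow, ← hmdef, hm2r, Nat.gcd_comm, Nat.gcd_eq_left ⟨2, by ring⟩,
      Nat.mul_div_cancel _ hrpos]
  have hordρ : orderOf ρ = r := by
    rw [hρdef, orderOf_pow, ← hmdef, hm2r, Nat.gcd_comm, Nat.gcd_eq_left ⟨r, rfl⟩,
      Nat.mul_div_cancel_left _ (by norm_num)]
  have hρr1 : ρ ^ r = 1 := by rw [hρdef, ← pow_mul]; exact h2rτ
  have hs2 : s ^ 2 = 1 := by rw [hsdef, ← pow_mul, mul_comm]; exact h2rτ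
  have hssq : ∀ x : L, s (s x) = x := fun x => by
    rw [← AlgEquiv.mul_apply, ← pow_two, hs2, AlgEquiv.one_apply]
  have hρapp : ∀ x : L, ρ x = τ (τ x) := fun x => by
    rw [hρdef, pow_two, AlgEquiv.mul_apply]
  have hτ2ne : τ ^ 2 ≠ 1 := by
    intro h
    have hdvd := orderOf_dvd_of_pow_eq_one h
    rw [← hmdef] at hdvd
    have := Nat.le_of_dvd (by norm_num) hdvd
    omega
  have hd : ∀ k l : ℕ, k < r → l < r → ρ ^ k = ρ ^ l → k = l := by
    intro k l hk hl h
    exact pow_injOn_Iio_orderOf (x := ρ) (by rw [hordρ]; exact hk)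
      (by rw [hordρ]; exact hl) h
  -- the eigenspaces of s
  set Vp : Submodule K L := LinearMap.ker (s.toLinearMap - LinearMap.id) with hVpdef
  set Vm : Submodule K L := LinearMap.ker (s.toLinearMap + LinearMap.id) with hVmdef
  have hVp : ∀ x : L, x ∈ Vp ↔ s x = x := fun x => by
    rw [hVpdef, LinearMap.mem_ker, LinearMap.sub_apply, LinearMap.id_apply, sub_eq_zero,
      AlgEquiv.toLinearMap_apply]
  have hVm : ∀ x : L, x ∈ Vm ↔ s x = -x := fun x => by
    rw [hVmdef, LinearMap.mem_ker, LinearMap.add_apply, LinearMap.id_apply,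
      add_eq_zero_iff_eq_neg, AlgEquiv.toLinearMap_apply]
  have hsup : Vp ⊔ Vm = ⊤ := by
    rw [eq_top_iff]
    intro x _
    have hu : (2:K)⁻¹ • (x + s x) ∈ Vp :=
      (hVp _).mpr (by rw [map_smul, map_add, hssq, add_comm])
    have hv : (2:K)⁻¹ • (x - s x) ∈ Vm :=
      (hVm _).mpr (by rw [map_smul, map_sub, hssq, ← smul_neg, neg_sub])
    refine Submodule.mem_sup.mpr ⟨_, hu, _, hv, ?_⟩
    rw [← smul_add]
    have h' : (x + s x) + (x - s x) = (2:K) • x := by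
      rw [two_smul]; ring
    rw [h', smul_smul, inv_mul_cancel₀ h2, one_smul]
  have hinf : Vp ⊓ Vm = ⊥ := by
    rw [eq_bot_iff]
    rintro x ⟨h1, h1'⟩
    have e1 : s x = x := (hVp x).mp h1
    have e2 : s x = -x := (hVm x).mp h1'
    have hx : x = -x := e1.symm.trans e2
    have hxx : (2:L) * x = 0 := by
      rw [two_mul]
      nth_rewrite 2 [hx]
      exact add_neg_cancel x
    rw [Submodule.mem_bot]
    exact (mul_eq_zero.mp hxx).resolve_left h2L
  -- an element δ with s δ = -δ
  have hsne1 : s ≠ 1 := by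
    intro h
    rw [h, orderOf_one] at hords
    omega
  obtain ⟨a, ha⟩ : ∃ a : L, s a ≠ a := by
    by_contra hcon
    push_neg at hcon
    exact hsne1 (AlgEquiv.ext fun x => by rw [hcon x, AlgEquiv.one_apply])
  set δ : L := a - s a with hδdef
  have hδne : δ ≠ 0 := sub_ne_zero.mpr (Ne.symm ha)
  have hsδ : s δ = -δ := by rw [hδdef, map_sub, hssq, neg_sub]
  -- equal dimensions
  have hmulinj : Function.Injective ⇑(LinearMap.mulLeft K δ) := fun u v h =>
    mul_left_cancel₀ hδne h
  have hmapp : Submodule.map (LinearMap.mulLeft K δ) Vp ≤ Vm := by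
    rintro _ ⟨x, hx, rfl⟩
    rw [hVm]
    show s (δ * x) = -(δ * x)
    rw [map_mul, hsδ, (hVp x).mp hx, neg_mul]
  have hmapm : Submodule.map (LinearMap.mulLeft K δ) Vm ≤ Vp := by
    rintro _ ⟨x, hx, rfl⟩
    rw [hVp]
    show s (δ * x) = δ * x
    rw [map_mul, hsδ, (hVm x).mp hx, neg_mul_neg]
  have hfr1 : finrank K Vp ≤ finrank K Vm := by
    rw [(Submodule.equivMapOfInjective _ hmulinj Vp).finrank_eq]
    exact Submodule.finrank_mono hmapp
  have hfr2 : finrank K Vm ≤ finrank K Vp := by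
    rw [(Submodule.equivMapOfInjective _ hmulinj Vm).finrank_eq]
    exact Submodule.finrank_mono hmapm
  have hsum_dim : finrank K Vp + finrank K Vm = n := by
    have h' := Submodule.finrank_sup_add_finrank_inf_eq Vp Vm
    rw [hsup, hinf, finrank_top, hn, finrank_bot] at h'
    omega
  have hdimVp : finrank K Vp = n / 2 := by omega
  have hdimVm : finrank K Vm = n / 2 := by omega
  -- injectivity of b ↦ φ_{b,τ}
  have hΦinj : Function.Injective ⇑(PhiMap K L τ) := by
    rw [injective_iff_map_eq_zero]
    intro b hb
    by_contra hbne
    have hall : ∀ x, b * x + τ b * τ (τ x) = 0 := fun x =>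
      (phi_eq_zero_iff b τ x).mp (by rw [show phi K L b τ x = (PhiMap K L τ b) x from rfl,
        hb, LinearMap.zero_apply])
    have h1 : τ b = -b := by
      have h1' := hall 1
      simp only [mul_one, map_one] at h1'
      exact eq_neg_of_add_eq_zero_right h1'
    have h2' : ∀ x, τ (τ x) = x := by
      intro x
      have hx := hall x
      rw [h1] at hx
      have : b * (x - τ (τ x)) = 0 := by ring_nf; linear_combination hx
      have := (mul_eq_zero.mp this).resolve_left hbne
      rw [sub_eq_zero] at this
      exact this.symm
    exact hτ2ne (AlgEquiv.ext fun x => by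
      rw [AlgEquiv.one_apply, pow_two, AlgEquiv.mul_apply]; exact h2' x)
  refine ⟨Submodule.map (PhiMap K L τ) Vp, Submodule.map (PhiMap K L τ) Vm, ?_, ?_, ?_, ?_, ?_, ?_⟩
  · rw [← Submodule.map_sup, hsup, Submodule.map_top, Asub_eq]
  · rw [← Submodule.map_inf _ hΦinj, hinf, Submodule.map_bot]
  · rw [← hdimVp]
    exact ((Submodule.equivMapOfInjective _ hΦinj Vp).finrank_eq).symm
  · rw [← hdimVm]
    exact ((Submodule.equivMapOfInjective _ hΦinj Vm).finrank_eq).symm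
  · -- nondegenerate forms
    rintro B hB hBne
    obtain ⟨b, hbVp, rfl⟩ := hB
    have hbne : b ≠ 0 := fun h => hBne (by rw [h, map_zero])
    rw [LinearMap.ker_eq_bot']
    intro x hx
    by_contra hxne
    have hτb : τ b ≠ 0 := fun h => hbne (by
      have := congrArg τ.symm h
      rwa [AlgEquiv.symm_apply_apply, map_zero] at this)
    have heq : b * x + τ b * τ (τ x) = 0 := (phi_eq_zero_iff b τ x).mp hx
    set c : L := -(b * (τ b)⁻¹) with hcdef
    have hcx : ρ x = c * x := by
      rw [hρapp x, hcdef]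
      field_simp
      linear_combination heq
    have hiter := eigen_pow ρ hcx r
    rw [hρr1, AlgEquiv.one_apply] at hiter
    have hNval : ∏ j ∈ Finset.range r, (ρ ^ j) c = -(1:L) := by
      have h' := prod_eigen_val τ hrodd h2rτ hbne (Or.inl rfl)
        (by rw [one_mul]; exact (hVp b).mp hbVp)
      rw [hρdef, hcdef]
      exact h'
    rw [hNval] at hiter
    have hxx : (2:L) * x = 0 := by linear_combination hiter
    exact hxne ((mul_eq_zero.mp hxx).resolve_left h2L)
  · -- forms of rank n - 2n/m
    rintro B hB hBne
    obtain ⟨b, hbVm, rfl⟩ := hB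
    have hbne : b ≠ 0 := fun h => hBne (by rw [h, map_zero])
    have hτb : τ b ≠ 0 := fun h => hbne (by
      have := congrArg τ.symm h
      rwa [AlgEquiv.symm_apply_apply, map_zero] at this)
    set c : L := -(b * (τ b)⁻¹) with hcdef
    have hc : c ≠ 0 := by
      rw [hcdef]
      exact neg_ne_zero.mpr (mul_ne_zero hbne (inv_ne_zero hτb))
    have hW : ∀ x : L, x ∈ LinearMap.ker (PhiMap K L τ b) ↔ ρ x = c * x := by
      intro x
      rw [LinearMap.mem_ker, show (PhiMap K L τ b) x = phi K L b τ x from rfl,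
        phi_eq_zero_iff, ← hρapp x]
      constructor
      · intro hx
        rw [hcdef]
        field_simp
        linear_combination hx
      · intro hx
        rw [hx, hcdef]
        field_simp
        ring
    have hN1 : ∏ j ∈ Finset.range r, (ρ ^ j) c = 1 := by
      have h' := prod_eigen_val τ hrodd h2rτ hbne (Or.inr rfl)
        (by rw [neg_one_mul]; exact (hVm b).mp hbVm)
      rw [hρdef, hcdef]
      rw [h']
      norm_num
    obtain ⟨x₀, hx₀ne, hx₀⟩ := exists_eigenvector hrpos ρ hρr1 hd hc hN1
    set H : Subgroup (L ≃ₐ[K] L) := Subgroup.zpowers ρ with hHdef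
    set F' : IntermediateField K L := IntermediateField.fixedField H with hF'def
    have hmemF_iff : ∀ f : L, f ∈ F' ↔ ∀ g : H, (g : L ≃ₐ[K] L) f = f := fun f => Iff.rfl
    have hρfix : ∀ f : F', ρ (f : L) = (f : L) :=
      fun f => (hmemF_iff f).mp f.2 ⟨ρ, Subgroup.mem_zpowers ρ⟩
    -- the linear isomorphism between F' and the radical
    have hmemW : ∀ f : F', ((f : L) * x₀) ∈ LinearMap.ker (PhiMap K L τ b) := by
      intro f
      rw [hW]
      rw [map_mul, hρfix f, hx₀]
      ring
    set ℓ : F' →ₗ[K] ↥(LinearMap.ker (PhiMap K L τ b)) :=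
      { toFun := fun f => ⟨(f : L) * x₀, hmemW f⟩
        map_add' := fun f g => by
          apply Subtype.ext
          push_cast
          rw [add_mul]
        map_smul' := fun k f => by
          apply Subtype.ext
          simp only [RingHom.id_apply, IntermediateField.coe_smul, SetLike.val_smul]
          rw [smul_mul_assoc] } with hℓdef
    have hℓinj : Function.Injective ⇑ℓ := by
      intro f g h
      have h' : (f : L) * x₀ = (g : L) * x₀ := congrArg Subtype.val h
      exact Subtype.ext (mul_right_cancel₀ hx₀ne h')
    have hℓsurj : Function.Surjective ⇑ℓ := by
      rintro ⟨x, hx⟩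
      have hρx : ρ x = c * x := (hW x).mp hx
      have hfix : ρ (x * x₀⁻¹) = x * x₀⁻¹ := by
        rw [map_mul, map_inv₀, hρx, hx₀]
        field_simp
      have hst : ρ ∈ MulAction.stabilizer (L ≃ₐ[K] L) (x * x₀⁻¹) := by
        rw [MulAction.mem_stabilizer_iff, AlgEquiv.smul_def]
        exact hfix
      have hmem : x * x₀⁻¹ ∈ F' := by
        rw [hmemF_iff]
        intro g
        obtain ⟨z, hz⟩ := g.2
        have hzst : (g : L ≃ₐ[K] L) ∈ MulAction.stabilizer (L ≃ₐ[K] L) (x * x₀⁻¹) := by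
          rw [← hz]
          exact Subgroup.zpow_mem _ hst z
        have := MulAction.mem_stabilizer_iff.mp hzst
        rwa [AlgEquiv.smul_def] at this
      refine ⟨⟨x * x₀⁻¹, hmem⟩, ?_⟩
      apply Subtype.ext
      show (x * x₀⁻¹) * x₀ = x
      rw [inv_mul_cancel_right₀ hx₀ne]
    have hfrk : finrank K ↥(LinearMap.ker (PhiMap K L τ b)) = finrank K F' :=
      ((LinearEquiv.ofBijective ℓ ⟨hℓinj, hℓsurj⟩).finrank_eq).symm
    -- dimension of the fixed field
    have hcardH : Fintype.card H = r := by
      rw [← hordρ]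
      exact Fintype.card_zpowers
    have hfix_dim : finrank F' L = r := by
      rw [hF'def, IntermediateField.finrank_fixedField_eq_card, Nat.card_eq_fintype_card, hcardH]
    have htower : finrank K F' * finrank F' L = finrank K L :=
      Module.finrank_mul_finrank K F' L
    have hfrF : finrank K F' = n / r := by
      rw [hfix_dim, hn] at htower
      exact (Nat.div_eq_of_eq_mul_left hrpos htower.symm).symm
    have harith : 2 * n / m = n / r := by
      rw [hm2r, Nat.mul_div_mul_left n r (by norm_num)]
    rw [hn, hfrk, hfrF, harith]
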